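/- arXiv:1506.01814 — 5 statements merged into one kernel-verified Lean document; each statement's English description precedes it below -/
import Mathlib

section
/- Let K be a number field, let S be a finite set of finite places of K, let O = O_{K,S} be the ring of S-integers, and let ℓ be an odd prime. Then the group SL₂(O) contains an element of order exactly ℓ if and only if there exists a primitive ℓ-th root of unity ζ in an algebraic closure of K such that ζ + ζ⁻¹ lies in the image of K (i.e. ζ_ℓ + ζ_ℓ⁻¹ ∈ K). -/
open IsDedekindDomain NumberField Polynomial

section Aux

lemma sl2Aux_eig_pow {F : Type*} [Field F] (A : Matrix (Fin 2) (Fin 2) F) (ζ : F)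
    (hdet : (A - ζ • 1).det = 0) (n : ℕ) (hA : A ^ n = 1) : ζ ^ n = 1 := by
  obtain ⟨v, hv, hv0⟩ := (Matrix.exists_mulVec_eq_zero_iff).2 hdet
  have hAv : A.mulVec v = ζ • v := by
    rw [Matrix.sub_mulVec, sub_eq_zero] at hv0
    rw [hv0, Matrix.smul_mulVec, Matrix.one_mulVec]
  have key : ∀ m : ℕ, (A ^ m).mulVec v = ζ ^ m • v := by
    intro m
    induction m with
    | zero => simp
    | succ m ih =>
        rw [pow_succ, ← Matrix.mulVec_mulVec, hAv, Matrix.mulVec_smul, ih,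
          smul_smul, pow_succ]
        ring_nf
  have h2 := key n
  rw [hA, Matrix.one_mulVec] at h2
  obtain ⟨i, hi⟩ := Function.ne_iff.1 hv
  rw [Pi.zero_apply] at hi
  have h3 : v i = (ζ ^ n) * v i := congrFun h2 i
  have h4 : (ζ ^ n - 1) * v i = 0 := by linear_combination -h3
  rcases mul_eq_zero.1 h4 with h | h
  · exact sub_eq_zero.1 h
  · exact absurd h hi

lemma sl2Aux_unipotent {F : Type*} [Field F] [CharZero F]
    {A : Matrix (Fin 2) (Fin 2) F} (hN : (A - 1) ^ 2 = 0) {n : ℕ} (hn : n ≠ 0)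
    (hA : A ^ n = 1) : A = 1 := by
  set N := A - 1 with hNdef
  have hNN : N * N = 0 := by rw [← pow_two]; exact hN
  have hA' : A = 1 + N := by rw [hNdef]; abel
  have key : ∀ m : ℕ, A ^ m = 1 + (m : F) • N := by
    intro m
    induction m with
    | zero => simp
    | succ m ih =>
        rw [pow_succ, ih, hA']
        have : (1 + (m : F) • N) * (1 + N) = 1 + ((m : F) + 1) • N := by
          rw [mul_add, add_mul, add_mul, mul_one, one_mul, mul_one, Matrix.smul_mul, hNN,
            smul_zero, add_smul, one_smul]
          abel
        rw [this]
        push_cast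
        ring_nf
  have h2 := key n
  rw [hA] at h2
  have h3 : (n : F) • N = 0 := by
    have := h2.symm
    rwa [add_eq_left] at this
  have h4 : N = 0 := (smul_eq_zero.1 h3).resolve_left (Nat.cast_ne_zero.2 hn)
  rw [hNdef] at h4
  exact sub_eq_zero.1 h4

lemma sl2Aux_pow_eq_one {F : Type*} [Field F] (A : Matrix (Fin 2) (Fin 2) F) (ζ : F)
    (hquad : (A - ζ • 1) * (A - ζ⁻¹ • 1) = 0) (ℓ : ℕ) (h1 : ζ ^ ℓ = 1) (hne : ζ ≠ ζ⁻¹) :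
    A ^ ℓ = 1 := by
  have hd1 : (X - C ζ) ∣ (X : F[X]) ^ ℓ - 1 :=
    dvd_iff_isRoot.2 (by simp [IsRoot, h1])
  have hd2 : (X - C ζ⁻¹) ∣ (X : F[X]) ^ ℓ - 1 :=
    dvd_iff_isRoot.2 (by simp [IsRoot, inv_pow, h1])
  have hcop : IsCoprime (X - C ζ) (X - C ζ⁻¹) :=
    Polynomial.isCoprime_X_sub_C_of_isUnit_sub ((sub_ne_zero.2 hne).isUnit)
  obtain ⟨q, hq⟩ := hcop.mul_dvd hd1 hd2
  have := congrArg (Polynomial.aeval A) hq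
  simp only [map_sub, map_mul, map_pow, map_one, aeval_X, aeval_C] at this
  have hsc : ∀ c : F, (algebraMap F (Matrix (Fin 2) (Fin 2) F)) c = c • 1 := fun c => by
    rw [Algebra.algebraMap_eq_smul_one]
  rw [hsc, hsc, hquad, zero_mul] at this
  exact sub_eq_zero.1 this

lemma sl2Aux_cayley {F : Type*} [CommRing F] (A : Matrix (Fin 2) (Fin 2) F) :
    A ^ 2 - A.trace • A + A.det • 1 = 0 := by
  ext i j
  fin_cases i <;> fin_cases j <;>
    simp [pow_two, Matrix.mul_apply, Matrix.trace_fin_two, Matrix.det_fin_two,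
      Fin.sum_univ_succ, Matrix.one_apply] <;> ring

lemma sl2Aux_det_sub_smul {F : Type*} [CommRing F] (A : Matrix (Fin 2) (Fin 2) F) (z : F) :
    (A - z • 1).det = z ^ 2 - A.trace * z + A.det := by
  simp [Matrix.det_fin_two, Matrix.trace_fin_two, Matrix.one_apply]
  ring

lemma sl2Aux_quad_factor {F : Type*} [CommRing F] (A : Matrix (Fin 2) (Fin 2) F) (a b : F) :
    (A - a • 1) * (A - b • 1) = A ^ 2 - (a + b) • A + (a * b) • 1 := by
  ext i j
  fin_cases i <;> fin_cases j <;>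
    simp [pow_two, Matrix.mul_apply, Fin.sum_univ_succ, Matrix.one_apply] <;> ring

end Aux

/-- For a number field `K`, a finite set `S` of finite places of `K`,
`O = O_{K,S}` the ring of `S`-integers, and an odd prime `ℓ`, the group `SL₂(O)` contains an
element of order exactly `ℓ` if and only if `ζ_ℓ + ζ_ℓ⁻¹ ∈ K`, i.e. there is a primitive
`ℓ`-th root of unity `ζ` in an algebraic closure of `K` with `ζ + ζ⁻¹` in the image of `K`. -/
theorem sl2_has_order_ell_iff (K : Type*) [Field K] [NumberField K]
    (S : Set (HeightOneSpectrum (𝓞 K))) (hS : S.Finite)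
    (ℓ : ℕ) (hℓ : ℓ.Prime) (hℓodd : Odd ℓ) :
    (∃ g : Matrix.SpecialLinearGroup (Fin 2) (S.integer K), orderOf g = ℓ) ↔
      (∃ ζ : AlgebraicClosure K, IsPrimitiveRoot ζ ℓ ∧
        ∃ x : K, algebraMap K (AlgebraicClosure K) x = ζ + ζ⁻¹) := by
  set F := AlgebraicClosure K with hF
  set O := S.integer K with hO
  -- the embedding O → F
  set φ : O →+* F := (algebraMap K F).comp ((Subalgebra.val (S.integer K)) : O →+* K) with hφdef
  have hφinj : Function.Injective φ :=
    (algebraMap K F).injective.comp Subtype.val_injective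
  have hmapinj : Function.Injective (φ.mapMatrix : Matrix (Fin 2) (Fin 2) O →+* _) := by
    exact Matrix.map_injective hφinj
  constructor
  · rintro ⟨g, hg⟩
    have hgl : g ^ ℓ = 1 := by rw [← hg]; exact pow_orderOf_eq_one g
    have hgne : g ≠ 1 := by
      intro h
      rw [h, orderOf_one] at hg
      exact hℓ.one_lt.ne' hg.symm
    set A : Matrix (Fin 2) (Fin 2) F := φ.mapMatrix (↑g) with hA
    have hAl : A ^ ℓ = 1 := by
      rw [hA, ← map_pow, ← Matrix.SpecialLinearGroup.coe_pow, hgl,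
        Matrix.SpecialLinearGroup.coe_one, map_one]
    have hAne : A ≠ 1 := by
      intro h
      apply hgne
      refine Subtype.coe_injective (hmapinj ?_)
      show φ.mapMatrix (g : Matrix (Fin 2) (Fin 2) O) =
        φ.mapMatrix ((1 : Matrix.SpecialLinearGroup (Fin 2) O) : Matrix (Fin 2) (Fin 2) O)
      rw [Matrix.SpecialLinearGroup.coe_one, map_one]
      exact h
    have hdet : A.det = 1 := by
      rw [hA, ← RingHom.map_det, g.prop, map_one]
    set t : F := A.trace with ht0
    obtain ⟨ζ, hζroot⟩ := IsAlgClosed.exists_root (C 1 * X ^ 2 + C (-t) * X + C 1)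
      (by rw [Polynomial.degree_quadratic one_ne_zero]; exact (by decide))
    have hquadeq : ζ ^ 2 - t * ζ + 1 = 0 := by
      have := hζroot
      simp only [IsRoot, eval_add, eval_mul, eval_pow, eval_X, eval_C] at this
      linear_combination this
    have hζ0 : ζ ≠ 0 := by
      intro h
      rw [h] at hquadeq
      simp at hquadeq
    have hinv : ζ⁻¹ = t - ζ := by
      apply inv_eq_of_mul_eq_one_right
      linear_combination -hquadeq
    have ht : t = ζ + ζ⁻¹ := by rw [hinv]; ring
    have hdetzero : (A - ζ • 1).det = 0 := by
      rw [sl2Aux_det_sub_smul, hdet, ← ht0]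
      linear_combination hquadeq
    have hζl : ζ ^ ℓ = 1 := sl2Aux_eig_pow A ζ hdetzero ℓ hAl
    have hquad : (A - ζ • 1) * (A - ζ⁻¹ • 1) = 0 := by
      rw [sl2Aux_quad_factor, ← ht, mul_inv_cancel₀ hζ0]
      have hc := sl2Aux_cayley A
      rwa [hdet, ← ht0] at hc
    have hζne1 : ζ ≠ 1 := by
      intro h1
      apply hAne
      refine sl2Aux_unipotent ?_ hℓ.pos.ne' hAl
      have h2 := hquad
      rw [h1, inv_one, one_smul] at h2
      rwa [pow_two]
    have hord : orderOf ζ = ℓ := by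
      have hdvd : orderOf ζ ∣ ℓ := orderOf_dvd_of_pow_eq_one hζl
      rcases hℓ.eq_one_or_self_of_dvd _ hdvd with h | h
      · exact absurd (orderOf_eq_one_iff.1 h) hζne1
      · exact h
    refine ⟨ζ, hord ▸ IsPrimitiveRoot.orderOf ζ, ?_⟩
    refine ⟨(((g : Matrix (Fin 2) (Fin 2) O) 0 0 : K) + ((g : Matrix (Fin 2) (Fin 2) O) 1 1 : K)), ?_⟩
    have htr : algebraMap K F (((g : Matrix (Fin 2) (Fin 2) O) 0 0 : K)
        + ((g : Matrix (Fin 2) (Fin 2) O) 1 1 : K)) = t := by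
      rw [ht0, hA, RingHom.mapMatrix_apply, Matrix.trace_fin_two, map_add]
      rfl
    rw [htr, ht]
  · rintro ⟨ζ, hζprim, x, hx⟩
    have hℓ0 : ℓ ≠ 0 := hℓ.pos.ne'
    have hζl : ζ ^ ℓ = 1 := hζprim.pow_eq_one
    have hζ0 : ζ ≠ 0 := by
      intro h
      rw [h, zero_pow hℓ0] at hζl
      exact zero_ne_one hζl
    have hζint : IsIntegral ℤ ζ :=
      ⟨X ^ ℓ - C 1, monic_X_pow_sub_C 1 hℓ0, by simp [hζl]⟩
    have hζinvint : IsIntegral ℤ ζ⁻¹ := by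
      have h1 : ζ * ζ ^ (ℓ - 1) = 1 := by
        rw [← pow_succ', Nat.sub_add_cancel hℓ.one_lt.le]
        exact hζl
      rw [inv_eq_of_mul_eq_one_right h1]
      exact hζint.pow _
    have hxint : IsIntegral ℤ x :=
      (isIntegral_algebraMap_iff (algebraMap K F).injective).1
        (by rw [hx]; exact hζint.add hζinvint)
    obtain ⟨z, hz⟩ := IsIntegralClosure.isIntegral_iff (A := 𝓞 K).1 hxint
    have hmem : x ∈ S.integer K := hz ▸ Subalgebra.algebraMap_mem _ z
    set y : O := ⟨x, hmem⟩ with hy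
    have hMdet : (!![0, -1; 1, y] : Matrix (Fin 2) (Fin 2) O).det = 1 := by
      simp [Matrix.det_fin_two_of]
    set M : Matrix.SpecialLinearGroup (Fin 2) O := ⟨!![0, -1; 1, y], hMdet⟩ with hM
    refine ⟨M, ?_⟩
    set A : Matrix (Fin 2) (Fin 2) F := φ.mapMatrix (↑M) with hA
    have hyx : φ y = ζ + ζ⁻¹ := by
      rw [← hx]; rfl
    have htr : A.trace = ζ + ζ⁻¹ := by
      rw [hA, hM, RingHom.mapMatrix_apply, Matrix.trace_fin_two]
      simp [Matrix.map_apply, hyx]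
    have hdet : A.det = 1 := by
      rw [hA, ← RingHom.map_det, M.prop, map_one]
    have hne : ζ ≠ ζ⁻¹ := by
      intro h
      have h2 : ζ ^ 2 = 1 := by
        rw [pow_two]
        nth_rewrite 2 [h]
        exact mul_inv_cancel₀ hζ0
      have hdvd2 := hζprim.dvd_of_pow_eq_one 2 h2
      have hl2 : ℓ = 2 := (Nat.prime_dvd_prime_iff_eq hℓ Nat.prime_two).1 hdvd2
      rw [hl2] at hℓodd
      exact (Nat.not_odd_iff_even.2 even_two) hℓodd
    have hquad : (A - ζ • 1) * (A - ζ⁻¹ • 1) = 0 := by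
      rw [sl2Aux_quad_factor, mul_inv_cancel₀ hζ0, ← htr]
      have hc := sl2Aux_cayley A
      rwa [hdet] at hc
    have hAl : A ^ ℓ = 1 := sl2Aux_pow_eq_one A ζ hquad ℓ hζl hne
    have hMl : M ^ ℓ = 1 := by
      refine Subtype.coe_injective (hmapinj ?_)
      show φ.mapMatrix ((M ^ ℓ : Matrix.SpecialLinearGroup (Fin 2) O) : Matrix (Fin 2) (Fin 2) O) =
        φ.mapMatrix ((1 : Matrix.SpecialLinearGroup (Fin 2) O) : Matrix (Fin 2) (Fin 2) O)
      rw [Matrix.SpecialLinearGroup.coe_pow, Matrix.SpecialLinearGroup.coe_one, map_one, map_pow]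
      exact hAl
    have hMne : M ≠ 1 := by
      intro h
      have h01 := congrArg
        (fun m : Matrix.SpecialLinearGroup (Fin 2) O => ((m : Matrix (Fin 2) (Fin 2) O) 0 1 : K)) h
      simp [hM, Matrix.SpecialLinearGroup.coe_one, Matrix.one_apply] at h01
    have hdvd : orderOf M ∣ ℓ := orderOf_dvd_of_pow_eq_one hMl
    rcases hℓ.eq_one_or_self_of_dvd _ hdvd with h | h
    · exact absurd (orderOf_eq_one_iff.1 h) hMne
    · exact h
end

section
/- Let D be an integral domain of characteristic 0, ℓ an odd prime, g ∈ SL₂(D) an element of order exactly ℓ, and x ∈ GL₂(D) such that x·g·x⁻¹ = g^k for some natural number k. Then k ≡ 1 (mod ℓ) or k ≡ −1 (mod ℓ). -/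
private lemma one_add_nilsq_pow {R : Type*} [Ring R] (N : R) (h : N * N = 0) :
    ∀ n : ℕ, (1 + N) ^ n = 1 + n • N := by
  intro n
  induction n with
  | zero => simp
  | succ n ih =>
    rw [pow_succ, ih, add_smul, one_smul, add_mul, mul_add, mul_add, one_mul, mul_one,
      smul_mul_assoc, h, smul_zero]
    rw [one_mul]; abel

private lemma cayley_fin_two {K : Type*} [CommRing K] (A : Matrix (Fin 2) (Fin 2) K) :
    A * A - A.trace • A + A.det • 1 = 0 := by
  ext i j
  fin_cases i <;> fin_cases j <;>
    simp [Matrix.mul_apply, Fin.sum_univ_two, Matrix.trace_fin_two, Matrix.det_fin_two,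
      Matrix.one_apply] <;> ring

private lemma det_smul_one_sub {K : Type*} [CommRing K] (A : Matrix (Fin 2) (Fin 2) K) (z : K) :
    (z • (1 : Matrix (Fin 2) (Fin 2) K) - A).det = z ^ 2 - A.trace * z + A.det := by
  simp [Matrix.det_fin_two, Matrix.trace_fin_two, Matrix.one_apply]
  ring

set_option maxHeartbeats 1000000 in
set_option synthInstance.maxHeartbeats 400000 in
/-- Let `D` be an integral domain of characteristic `0`, `ℓ` an odd prime,
`g ∈ SL₂(D)` of order exactly `ℓ`, and `x ∈ GL₂(D)` with `x·g·x⁻¹ = g^k` for a natural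
number `k`.  Then `k ≡ 1 (mod ℓ)` or `k ≡ −1 (mod ℓ)`. -/
theorem conj_pow_of_order_ell (D : Type*) [CommRing D] [IsDomain D] [CharZero D]
    (ℓ : ℕ) (hℓ : ℓ.Prime) (hℓodd : Odd ℓ)
    (g : Matrix.SpecialLinearGroup (Fin 2) D) (hg : orderOf g = ℓ)
    (x : Matrix.GeneralLinearGroup (Fin 2) D) (k : ℕ)
    (hx : x * Matrix.SpecialLinearGroup.toGL g * x⁻¹ = Matrix.SpecialLinearGroup.toGL g ^ k) :
    (k : ZMod ℓ) = 1 ∨ (k : ZMod ℓ) = -1 := by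
  classical
  set K := AlgebraicClosure (FractionRing D) with hK
  let φ : D →+* K := (algebraMap (FractionRing D) K).comp (algebraMap D (FractionRing D))
  have hφ : Function.Injective φ :=
    (algebraMap (FractionRing D) K).injective.comp (IsFractionRing.injective D (FractionRing D))
  haveI : CharZero K := charZero_of_injective_ringHom hφ
  set M : Matrix (Fin 2) (Fin 2) K := φ.mapMatrix (g : Matrix (Fin 2) (Fin 2) D) with hM
  -- det M = 1
  have hdet : M.det = 1 := by
    rw [hM, ← RingHom.map_det, g.prop, map_one]
  -- M ^ ℓ = 1
  have hMl : M ^ ℓ = 1 := by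
    have h1 : g ^ ℓ = 1 := by rw [← hg]; exact pow_orderOf_eq_one g
    have h2 : ((g : Matrix (Fin 2) (Fin 2) D)) ^ ℓ = 1 := by
      rw [← Matrix.SpecialLinearGroup.coe_pow, h1, Matrix.SpecialLinearGroup.coe_one]
    rw [hM, ← map_pow, h2, map_one]
  -- traces agree
  have htrD : Matrix.trace (g : Matrix (Fin 2) (Fin 2) D) =
      Matrix.trace ((g : Matrix (Fin 2) (Fin 2) D) ^ k) := by
    have h0 := congrArg Units.val hx
    rw [Units.val_mul, Units.val_mul, Units.val_pow_eq_pow_val] at h0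
    have h1 := congrArg Matrix.trace h0
    rwa [Matrix.trace_units_conj x (Matrix.SpecialLinearGroup.toGL g).val] at h1
  have hmaptr : ∀ A : Matrix (Fin 2) (Fin 2) D, (φ.mapMatrix A).trace = φ A.trace := by
    intro A
    simp [Matrix.trace_fin_two, RingHom.mapMatrix_apply, Matrix.map_apply, map_add]
  have htr : M.trace = (M ^ k).trace := by
    rw [hM, ← map_pow, hmaptr, hmaptr, htrD]
  -- g ≠ 1 hence M ≠ 1
  have hg1 : g ≠ 1 := by
    intro h; rw [h, orderOf_one] at hg; exact hℓ.ne_one hg.symm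
  have hM1 : M ≠ 1 := by
    intro h
    apply hg1
    have h2 : ((g : Matrix (Fin 2) (Fin 2) D)).map φ = (1 : Matrix (Fin 2) (Fin 2) D).map φ := by
      simpa [hM, Matrix.map_one φ (map_zero φ) (map_one φ)] using h
    have h3 : (g : Matrix (Fin 2) (Fin 2) D) = 1 := Matrix.map_injective hφ h2
    exact Subtype.coe_injective (by simpa using h3)
  -- eigenvalue
  obtain ⟨z, hz⟩ : ∃ z : K, z ^ 2 - M.trace * z + 1 = 0 := by
    have hdeg : (Polynomial.X ^ 2 - Polynomial.C M.trace * Polynomial.X + 1 :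
        Polynomial K).degree = 2 := by
      compute_degree!
    obtain ⟨z, hz⟩ := IsAlgClosed.exists_root _ (by rw [hdeg]; exact two_ne_zero)
    refine ⟨z, ?_⟩
    simpa [Polynomial.IsRoot, Polynomial.eval_pow] using hz
  have hdetz : (z • (1 : Matrix (Fin 2) (Fin 2) K) - M).det = 0 := by
    rw [det_smul_one_sub, hdet, hz]
  obtain ⟨v, hv0, hv⟩ := (Matrix.exists_mulVec_eq_zero_iff).2 hdetz
  have hvM : M.mulVec v = z • v := by
    have := hv
    rw [Matrix.sub_mulVec, sub_eq_zero, Matrix.smul_mulVec, Matrix.one_mulVec] at this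
    exact this.symm
  have hvpow : ∀ n : ℕ, (M ^ n).mulVec v = z ^ n • v := by
    intro n
    induction n with
    | zero => simp
    | succ n ih =>
      rw [pow_succ, ← Matrix.mulVec_mulVec, hvM, Matrix.mulVec_smul, ih, smul_smul, pow_succ]
      rw [mul_comm]
  obtain ⟨i, hi⟩ : ∃ i, v i ≠ 0 := by
    by_contra h; push_neg at h; exact hv0 (funext h)
  have hzl : z ^ ℓ = 1 := by
    have := hvpow ℓ
    rw [hMl, Matrix.one_mulVec] at this
    have h2 : (z ^ ℓ - 1) • v = 0 := by rw [sub_smul, one_smul, ← this, sub_self]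
    have := congrFun h2 i
    simp only [Pi.smul_apply, smul_eq_mul, Pi.zero_apply, mul_eq_zero] at this
    rcases this with h | h
    · exact sub_eq_zero.mp h
    · exact absurd h hi
  -- eigenvalue equation for `M ^ k`
  have hdetk : (M ^ k).det = 1 := by rw [Matrix.det_pow, hdet, one_pow]
  have hvk : ((z ^ k) • (1 : Matrix (Fin 2) (Fin 2) K) - M ^ k).mulVec v = 0 := by
    rw [Matrix.sub_mulVec, hvpow k, Matrix.smul_mulVec, Matrix.one_mulVec, sub_self]
  have hdetzk : ((z ^ k) • (1 : Matrix (Fin 2) (Fin 2) K) - M ^ k).det = 0 :=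
    Matrix.exists_mulVec_eq_zero_iff.1 ⟨v, hv0, hvk⟩
  rw [det_smul_one_sub, hdetk, ← htr] at hdetzk
  -- factor the two quadratics
  have hfac : (z ^ k * z - 1) * (z ^ k - z) = 0 := by
    linear_combination z * hdetzk - z ^ k * hz
  have hz0 : z ≠ 0 := by
    intro h
    rw [h, zero_pow hℓ.ne_zero] at hzl
    exact zero_ne_one hzl
  have hz1 : z ≠ 1 := by
    intro h
    apply hM1
    have ht2 : M.trace = 2 := by
      rw [h] at hz; linear_combination -hz
    have hch := cayley_fin_two M
    rw [ht2, hdet] at hch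
    have hNN : (M - 1) * (M - 1) = 0 := by
      have e : (M - 1) * (M - 1) =
          M * M - (2 : K) • M + (1 : K) • (1 : Matrix (Fin 2) (Fin 2) K) := by
        simp only [sub_mul, mul_sub, one_mul, mul_one, two_smul, one_smul]; abel
      rw [e, hch]
    have hpow := one_add_nilsq_pow (M - 1) hNN ℓ
    rw [add_sub_cancel] at hpow
    rw [hpow] at hMl
    have hsm : ℓ • (M - 1) = 0 := add_eq_left.1 hMl
    have hcast : (ℓ : K) ≠ 0 := Nat.cast_ne_zero.2 hℓ.ne_zero
    rw [← Nat.cast_smul_eq_nsmul K] at hsm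
    have := (smul_eq_zero.1 hsm).resolve_left hcast
    rw [sub_eq_zero] at this
    exact this
  -- pass to units
  haveI : Fact ℓ.Prime := ⟨hℓ⟩
  set zu : Kˣ := Units.mk0 z hz0 with hzu
  have hzul : zu ^ ℓ = 1 := by ext; simpa [hzu] using hzl
  have hzu1 : zu ≠ 1 := by
    intro h
    exact hz1 (by simpa [hzu] using congrArg Units.val h)
  have hord : orderOf zu = ℓ := orderOf_eq_prime hzul hzu1
  rcases mul_eq_zero.1 hfac with h | h
  · -- z ^ (k+1) = 1, so k ≡ -1
    right
    have hku : zu ^ (k + 1) = 1 := by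
      ext
      simpa [hzu, pow_succ, sub_eq_zero] using sub_eq_zero.1 h
    have hdvd : ℓ ∣ k + 1 := hord ▸ orderOf_dvd_of_pow_eq_one hku
    have : ((k + 1 : ℕ) : ZMod ℓ) = 0 := (ZMod.natCast_eq_zero_iff _ _).2 hdvd
    rw [Nat.cast_add, Nat.cast_one] at this
    linear_combination this
  · -- z ^ k = z, so k ≡ 1
    left
    have hku : zu ^ k = zu ^ 1 := by
      ext
      simpa [hzu, pow_one] using sub_eq_zero.1 h
    have hmod : k ≡ 1 [MOD ℓ] := by
      have := pow_eq_pow_iff_modEq.1 hku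
      rwa [hord] at this
    have := (ZMod.natCast_eq_natCast_iff k 1 ℓ).2 hmod
    simpa using this
end

section
/- Let K be a number field, S a finite set of finite places of K, O = O_{K,S}, and ℓ an odd prime which is invertible in O. Let a ∈ O be such that a = ζ + ζ⁻¹ for some primitive ℓ-th root of unity ζ in an algebraic closure of K, and assume K contains no primitive ℓ-th root of unity (so that R := O[T]/(T² − aT + 1) is an integral domain). Then for every g ∈ SL₂(O) of order exactly ℓ with tr(g) = a, the centralizer of g in SL₂(O) is isomorphic as a group to ker(Nm₁ : R^× → O^×), the group of units of R of norm 1. -/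
open IsDedekindDomain NumberField Polynomial

/-- The quadratic extension `R = O[T]/(T² − a·T + 1)` of a commutative ring `O`. -/
noncomputable abbrev QuadExt (O : Type*) [CommRing O] (a : O) : Type _ :=
  AdjoinRoot (X ^ 2 - C a * X + 1 : O[X])

set_option linter.unusedSectionVars false
set_option linter.unusedTactic false
set_option linter.unreachableTactic false

namespace QuadCentAux

variable {O : Type*} [CommRing O] [Nontrivial O] (a : O)

theorem fq_monic : (X ^ 2 - C a * X + 1 : O[X]).Monic := by
  have h : (X ^ 2 - C a * X + 1 : O[X]) = X ^ 2 - (C a * X - 1) := by ring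
  rw [h]
  refine Polynomial.monic_X_pow_sub ?_
  refine lt_of_le_of_lt (le_trans (Polynomial.degree_sub_le _ _) ?_) (by norm_num : (1 : WithBot ℕ) < 2)
  simp only [sup_le_iff]
  exact ⟨Polynomial.degree_C_mul_X_le _, le_trans Polynomial.degree_one_le (by norm_num)⟩

theorem fq_natDegree : (X ^ 2 - C a * X + 1 : O[X]).natDegree = 2 := by
  compute_degree! <;> exact one_ne_zero

noncomputable def tq : QuadExt O a := AdjoinRoot.root _

noncomputable def cq (α β : O) : QuadExt O a :=
  AdjoinRoot.of _ α + AdjoinRoot.of _ β * tq a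

theorem tq_sq : tq a * tq a = AdjoinRoot.of _ a * tq a - 1 := by
  have h0 : AdjoinRoot.mk (X ^ 2 - C a * X + 1 : O[X]) (X ^ 2 - C a * X + 1) = 0 :=
    AdjoinRoot.mk_self (f := (X ^ 2 - C a * X + 1 : O[X]))
  simp only [map_add, map_sub, map_mul, map_pow, map_one, AdjoinRoot.mk_X, AdjoinRoot.mk_C] at h0
  have : (AdjoinRoot.root (X ^ 2 - C a * X + 1 : O[X])) = tq a := rfl
  rw [this] at h0
  linear_combination h0

theorem cq_mul (α β γ δ : O) :
    cq a α β * cq a γ δ = cq a (α * γ - β * δ) (α * δ + β * γ + a * (β * δ)) := by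
  simp only [cq, map_add, map_sub, map_mul]
  linear_combination (AdjoinRoot.of _ β * AdjoinRoot.of _ δ) * tq_sq a

theorem cq_one : cq a 1 0 = 1 := by simp [cq]


noncomputable def bq : Module.Basis (Fin 2) O (QuadExt O a) :=
  ((AdjoinRoot.powerBasis' (fq_monic a)).basis).reindex (finCongr (fq_natDegree a))

theorem bq_apply (i : Fin 2) : bq a i = tq a ^ (i : ℕ) := by
  rw [bq, Module.Basis.reindex_apply, (AdjoinRoot.powerBasis' (fq_monic a)).basis_eq_pow]
  simp [tq]
  rfl

theorem cq_eq_smul (α β : O) : cq a α β = α • bq a 0 + β • bq a 1 := by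
  have h0 : bq a 0 = 1 := by rw [bq_apply]; simp
  have h1 : bq a 1 = tq a := by rw [bq_apply]; simp
  rw [h0, h1, cq]
  simp [Algebra.smul_def, AdjoinRoot.algebraMap_eq]

theorem bq_repr_cq (α β : O) (i : Fin 2) :
    (bq a).repr (cq a α β) i = ![α, β] i := by
  rw [cq_eq_smul, map_add, map_smul, map_smul, Module.Basis.repr_self, Module.Basis.repr_self]
  fin_cases i <;> simp

theorem exists_cq (x : QuadExt O a) : ∃ α β : O, x = cq a α β := by
  refine ⟨(bq a).repr x 0, (bq a).repr x 1, ?_⟩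
  rw [cq_eq_smul]
  have := (bq a).sum_repr x
  rw [Fin.sum_univ_two] at this
  exact this.symm

theorem norm_cq (α β : O) :
    Algebra.norm O (cq a α β) = α * α + a * (α * β) + β * β := by
  classical
  rw [Algebra.norm_eq_matrix_det (bq a), Matrix.det_fin_two]
  have h0 : bq a 0 = 1 := by rw [bq_apply]; simp
  have h1 : bq a 1 = tq a := by rw [bq_apply]; simp
  have e0 : cq a α β * bq a 0 = cq a α β := by rw [h0, mul_one]
  have e1 : cq a α β * bq a 1 = cq a (-β) (α + β * a) := by
    have hct : cq a 0 1 = tq a := by simp [cq]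
    rw [h1, ← hct, cq_mul]
    congr 1 <;> ring
  simp only [Algebra.leftMulMatrix_eq_repr_mul, e0, e1, bq_repr_cq]
  simp [Matrix.cons_val_zero, Matrix.cons_val_one]
  ring


set_option maxHeartbeats 1000000 in
theorem quad_central (hd : IsUnit (a ^ 2 - 4))
    (g : Matrix.SpecialLinearGroup (Fin 2) O)
    (htr : Matrix.trace (g : Matrix (Fin 2) (Fin 2) O) = a) :
    Nonempty (Subgroup.centralizer {g} ≃*
      (Units.map (Algebra.norm O : QuadExt O a →* O)).ker) := by
  classical
  obtain ⟨d, hdu⟩ := hd.exists_right_inv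
  set gm : Matrix (Fin 2) (Fin 2) O := (g : Matrix (Fin 2) (Fin 2) O) with hgm
  have htrace : gm 0 0 + gm 1 1 = a := by rw [← Matrix.trace_fin_two]; exact htr
  have hdet2 : gm 0 0 * gm 1 1 - gm 0 1 * gm 1 0 = 1 := by
    rw [← Matrix.det_fin_two]; exact g.2
  have hcomb : (d * (4 * gm 1 0)) * gm 0 1 + (d * (gm 0 0 - gm 1 1)) * (gm 0 0 - gm 1 1) = 1 := by
    linear_combination hdu + (d * (gm 0 0 + gm 1 1 + a)) * htrace - 4 * d * hdet2
  -- Cayley-Hamilton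
  have hCH : (Polynomial.aeval gm) (X ^ 2 - C a * X + 1 : O[X]) = 0 := by
    have h : (Polynomial.aeval gm) (X ^ 2 - C a * X + 1 : O[X]) = gm * gm - a • gm + 1 := by
      simp [sq, Algebra.algebraMap_eq_smul_one, smul_mul_assoc]
    rw [h]
    ext i j
    fin_cases i <;> fin_cases j <;>
      simp only [Matrix.sub_apply, Matrix.add_apply, Matrix.smul_apply, Matrix.one_apply,
        Matrix.mul_apply, Fin.sum_univ_two, smul_eq_mul, Matrix.zero_apply, Fin.isValue,
        if_true, if_false, Fin.zero_eta, Fin.mk_one, ne_eq, zero_ne_one, one_ne_zero,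
        reduceCtorEq]
    · linear_combination gm 0 0 * htrace - hdet2
    · linear_combination gm 0 1 * htrace
    · linear_combination gm 1 0 * htrace
    · linear_combination gm 1 1 * htrace - hdet2
  have haeval : ∀ p ∈ Ideal.span {(X ^ 2 - C a * X + 1 : O[X])},
      (Polynomial.aeval gm).toRingHom p = 0 := by
    intro p hp
    rw [Ideal.mem_span_singleton] at hp
    obtain ⟨c, rfl⟩ := hp
    show (Polynomial.aeval gm) (_ * c) = 0
    rw [map_mul, hCH, zero_mul]
  set Θ : QuadExt O a →+* Matrix (Fin 2) (Fin 2) O :=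
    Ideal.Quotient.lift _ (Polynomial.aeval gm).toRingHom haeval with hΘ
  have hΘmk : ∀ p : O[X], Θ (AdjoinRoot.mk _ p) = Polynomial.aeval gm p := fun p => rfl
  have hΘc : ∀ α β : O, Θ (cq a α β) = α • 1 + β • gm := by
    intro α β
    have h1 : ∀ γ : O, Θ (AdjoinRoot.of _ γ) = γ • 1 := by
      intro γ
      rw [show (AdjoinRoot.of _ γ : QuadExt O a) = AdjoinRoot.mk _ (C γ) from rfl, hΘmk,
        aeval_C, Algebra.algebraMap_eq_smul_one]
    have h2 : Θ (tq a) = gm := by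
      rw [show (tq a : QuadExt O a) = AdjoinRoot.mk _ X from rfl, hΘmk, aeval_X]
    rw [cq, map_add, map_mul, h1, h1, h2, smul_mul_assoc, one_mul]
  have hΘinj : Function.Injective Θ := by
    intro x y hxy
    obtain ⟨α, β, rfl⟩ := exists_cq a x
    obtain ⟨γ, δ, rfl⟩ := exists_cq a y
    rw [hΘc, hΘc] at hxy
    have h00 : α + β * gm 0 0 = γ + δ * gm 0 0 := by
      have := congrFun (congrFun hxy 0) 0
      simpa [Matrix.one_apply, mul_comm] using this
    have h01 : β * gm 0 1 = δ * gm 0 1 := by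
      have := congrFun (congrFun hxy 0) 1
      simpa [Matrix.one_apply, mul_comm] using this
    have h10 : β * gm 1 0 = δ * gm 1 0 := by
      have := congrFun (congrFun hxy 1) 0
      simpa [Matrix.one_apply, mul_comm] using this
    have h11 : α + β * gm 1 1 = γ + δ * gm 1 1 := by
      have := congrFun (congrFun hxy 1) 1
      simpa [Matrix.one_apply, mul_comm] using this
    have hβ : β = δ := by
      linear_combination (d * (4 * gm 1 0)) * h01 + (d * (gm 0 0 - gm 1 1)) * h00
        - (d * (gm 0 0 - gm 1 1)) * h11 - (β - δ) * hcomb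
    have hα : α = γ := by linear_combination h00 - gm 0 0 * hβ
    rw [hα, hβ]
  have hrep : ∀ m : Matrix (Fin 2) (Fin 2) O, gm * m = m * gm →
      ∃ α β : O, m = α • 1 + β • gm := by
    intro m hm
    have c00 : gm 0 0 * m 0 0 + gm 0 1 * m 1 0 = m 0 0 * gm 0 0 + m 0 1 * gm 1 0 := by
      have := congrFun (congrFun hm 0) 0
      simpa [Matrix.mul_apply, Fin.sum_univ_two] using this
    have c01 : gm 0 0 * m 0 1 + gm 0 1 * m 1 1 = m 0 0 * gm 0 1 + m 0 1 * gm 1 1 := by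
      have := congrFun (congrFun hm 0) 1
      simpa [Matrix.mul_apply, Fin.sum_univ_two] using this
    have c10 : gm 1 0 * m 0 0 + gm 1 1 * m 1 0 = m 1 0 * gm 0 0 + m 1 1 * gm 1 0 := by
      have := congrFun (congrFun hm 1) 0
      simpa [Matrix.mul_apply, Fin.sum_univ_two] using this
    set u := d * (4 * gm 1 0) with hu
    set w := d * (gm 0 0 - gm 1 1) with hw
    set β := u * m 0 1 + w * (m 0 0 - m 1 1) with hβ
    refine ⟨m 0 0 - β * gm 0 0, β, ?_⟩
    ext i j
    fin_cases i <;> fin_cases j <;>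
      simp only [Matrix.add_apply, Matrix.smul_apply, Matrix.one_apply, smul_eq_mul,
        Fin.isValue, if_true, if_false, Fin.zero_eta, Fin.mk_one, ne_eq, zero_ne_one,
        one_ne_zero, reduceCtorEq]
    · ring
    · rw [hβ, hu, hw]
      linear_combination (d * (gm 0 0 - gm 1 1)) * c01 - m 0 1 * hcomb
    · rw [hβ, hu, hw]
      linear_combination (d * (4 * gm 1 0)) * c00 - (d * (gm 0 0 - gm 1 1)) * c10
        - m 1 0 * hcomb
    · rw [hβ, hu, hw]
      linear_combination (d * (4 * gm 1 0)) * c01 + (m 0 0 - m 1 1) * hcomb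
  have hdetΘ : ∀ x : QuadExt O a, (Θ x).det = Algebra.norm O x := by
    intro x
    obtain ⟨α, β, rfl⟩ := exists_cq a x
    rw [hΘc, norm_cq, Matrix.det_fin_two]
    simp only [Matrix.add_apply, Matrix.smul_apply, Matrix.one_apply, smul_eq_mul,
      if_true, if_false, Fin.isValue, ne_eq, zero_ne_one, one_ne_zero, reduceCtorEq,
      if_pos rfl]
    linear_combination (α * β) * htrace + (β * β) * hdet2
  -- the forward map from norm-one units to the centralizer
  have hmem1 : ∀ u : (Units.map (Algebra.norm O : QuadExt O a →* O)).ker,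
      Algebra.norm O ((u : (QuadExt O a)ˣ) : QuadExt O a) = 1 := by
    intro u
    have h := u.2
    rw [MonoidHom.mem_ker] at h
    have := congrArg Units.val h
    simpa using this
  have hdet1 : ∀ u : (Units.map (Algebra.norm O : QuadExt O a →* O)).ker,
      (Θ ((u : (QuadExt O a)ˣ) : QuadExt O a)).det = 1 := by
    intro u; rw [hdetΘ, hmem1]
  have hcommg : ∀ u : (Units.map (Algebra.norm O : QuadExt O a →* O)).ker,
      gm * Θ ((u : (QuadExt O a)ˣ) : QuadExt O a)
        = Θ ((u : (QuadExt O a)ˣ) : QuadExt O a) * gm := by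
    intro u
    have h2 : Θ (tq a) = gm := by
      rw [show (tq a : QuadExt O a) = AdjoinRoot.mk _ X from rfl, hΘmk, aeval_X]
    rw [← h2, ← map_mul, ← map_mul]
    exact congrArg Θ (mul_comm _ _)
  let F : (Units.map (Algebra.norm O : QuadExt O a →* O)).ker →*
      Subgroup.centralizer ({g} : Set (Matrix.SpecialLinearGroup (Fin 2) O)) :=
    MonoidHom.mk'
      (fun u => ⟨⟨Θ ((u : (QuadExt O a)ˣ) : QuadExt O a), hdet1 u⟩, by
        refine Subgroup.mem_centralizer_iff.mpr ?_
        intro h hh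
        rw [Set.mem_singleton_iff] at hh
        subst hh
        apply Subtype.ext
        show gm * _ = _ * gm
        exact hcommg u⟩)
      (by
        intro u v
        apply Subtype.ext
        apply Subtype.ext
        show Θ _ = Θ _ * Θ _
        rw [← map_mul]
        rfl)
  have hFinj : Function.Injective F := by
    intro u v huv
    have h : Θ ((u : (QuadExt O a)ˣ) : QuadExt O a)
        = Θ ((v : (QuadExt O a)ˣ) : QuadExt O a) :=
      congrArg (fun z : Subgroup.centralizer ({g} : Set (Matrix.SpecialLinearGroup (Fin 2) O)) =>
        ((z : Matrix.SpecialLinearGroup (Fin 2) O) : Matrix (Fin 2) (Fin 2) O)) huv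
    exact Subtype.ext (Units.ext (hΘinj h))
  have hFsurj : Function.Surjective F := by
    rintro ⟨m, hm⟩
    rw [Subgroup.mem_centralizer_iff] at hm
    have hm' := hm g (Set.mem_singleton g)
    have hcomm : gm * (m : Matrix (Fin 2) (Fin 2) O) = (m : Matrix (Fin 2) (Fin 2) O) * gm := by
      have := congrArg (fun z : Matrix.SpecialLinearGroup (Fin 2) O =>
        (z : Matrix (Fin 2) (Fin 2) O)) hm'
      simpa using this
    obtain ⟨α, β, hαβ⟩ := hrep (m : Matrix (Fin 2) (Fin 2) O) hcomm
    have hΘx : Θ (cq a α β) = (m : Matrix (Fin 2) (Fin 2) O) := by rw [hΘc]; exact hαβ.symm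
    have hnorm : Algebra.norm O (cq a α β) = 1 := by
      rw [← hdetΘ, hΘx]; exact m.2
    have hnorm' : α * α + a * (α * β) + β * β = 1 := by rw [← norm_cq]; exact hnorm
    have hxx' : cq a α β * cq a (α + a * β) (-β) = 1 := by
      calc cq a α β * cq a (α + a * β) (-β)
          = cq a (α * (α + a * β) - β * (-β)) (α * (-β) + β * (α + a * β) + a * (β * (-β))) :=
            cq_mul a α β (α + a * β) (-β)
        _ = cq a 1 0 := by
            have e1 : α * (α + a * β) - β * (-β) = 1 := by linear_combination hnorm'
            have e2 : α * (-β) + β * (α + a * β) + a * (β * (-β)) = 0 := by ring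
            rw [e1, e2]
        _ = 1 := cq_one a
    let xu : (QuadExt O a)ˣ :=
      ⟨cq a α β, cq a (α + a * β) (-β), hxx', by rw [mul_comm]; exact hxx'⟩
    have hker : xu ∈ (Units.map (Algebra.norm O : QuadExt O a →* O)).ker := by
      rw [MonoidHom.mem_ker]
      apply Units.ext
      simpa using hnorm
    refine ⟨⟨xu, hker⟩, ?_⟩
    apply Subtype.ext
    apply Subtype.ext
    exact hΘx
  exact ⟨(MulEquiv.ofBijective F ⟨hFinj, hFsurj⟩).symm⟩

end QuadCentAux

theorem disc_isUnit {K : Type*} [Field K] [NumberField K]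
    (S : Set (HeightOneSpectrum (𝓞 K)))
    (ℓ : ℕ) (hℓ : ℓ.Prime) (hℓodd : Odd ℓ) (hℓinv : IsUnit (ℓ : S.integer K))
    (a : S.integer K)
    (ha : ∃ ζ : AlgebraicClosure K, IsPrimitiveRoot ζ ℓ ∧
      algebraMap K (AlgebraicClosure K) (a : K) = ζ + ζ⁻¹) :
    IsUnit (a ^ 2 - 4) := by
  classical
  haveI : Fact ℓ.Prime := ⟨hℓ⟩
  set Cl := AlgebraicClosure K with hCl
  set φ := algebraMap K Cl with hφ
  obtain ⟨ζ, hζ, haζ⟩ := ha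
  -- basic facts about ζ
  have hζ0 : ζ ≠ 0 := hζ.ne_zero hℓ.ne_zero
  have hζζ : ζ * ζ⁻¹ = 1 := mul_inv_cancel₀ hζ0
  have hζmem : ζ ∈ primitiveRoots ℓ Cl := (mem_primitiveRoots hℓ.pos).2 hζ
  have hζinvmem : ζ⁻¹ ∈ primitiveRoots ℓ Cl := (mem_primitiveRoots hℓ.pos).2 hζ.inv
  have hne : ζ⁻¹ ≠ ζ := by
    intro h
    have h2 : ζ ^ 2 = 1 := by
      have := congrArg (· * ζ) h
      simpa [sq, inv_mul_cancel₀ hζ0] using this.symm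
    have hdvd : ℓ ∣ 2 := hζ.dvd_of_pow_eq_one 2 h2
    have := (Nat.prime_dvd_prime_iff_eq hℓ Nat.prime_two).1 hdvd
    rw [this] at hℓodd
    exact (Nat.not_odd_iff_even.2 (by decide)) hℓodd
  -- integrality of primitive roots
  have hintμ : ∀ μ ∈ primitiveRoots ℓ Cl, IsIntegral ℤ μ := by
    intro μ hμ
    have hμ' : μ ^ ℓ = 1 := ((mem_primitiveRoots hℓ.pos).1 hμ).pow_eq_one
    exact ⟨X ^ ℓ - Polynomial.C 1, Polynomial.monic_X_pow_sub_C 1 hℓ.ne_zero, by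
      simp [hμ']⟩
  -- evaluation of the cyclotomic polynomial at 1 and -1
  have hcyc : cyclotomic ℓ Cl = ∏ μ ∈ primitiveRoots ℓ Cl, (X - Polynomial.C μ) :=
    cyclotomic_eq_prod_X_sub_primitiveRoots hζ
  have h1 : ((ℓ : Cl)) = ∏ μ ∈ primitiveRoots ℓ Cl, (1 - μ) := by
    have h := Polynomial.eval_one_cyclotomic_prime (R := Cl) (p := ℓ)
    rw [hcyc] at h
    simpa [Polynomial.eval_prod] using h.symm
  have hm1 : (1 : Cl) = ∏ μ ∈ primitiveRoots ℓ Cl, (-1 - μ) := by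
    have h : Polynomial.eval (-1 : Cl) (cyclotomic ℓ Cl) = 1 := by
      rw [cyclotomic_prime, Polynomial.eval_finset_sum]
      simp only [Polynomial.eval_pow, Polynomial.eval_X]
      rw [neg_one_geom_sum, if_neg (Nat.not_even_iff_odd.2 hℓodd)]
    rw [hcyc] at h
    simpa [Polynomial.eval_prod] using h.symm
  haveI : CharZero Cl := charZero_of_injective_algebraMap (algebraMap K Cl).injective
  set A := φ (a : K) with hA
  -- split off the factors corresponding to ζ and ζ⁻¹
  have split : ∀ f : Cl → Cl, (∀ μ ∈ primitiveRoots ℓ Cl, IsIntegral ℤ (f μ)) →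
      ∃ c : Cl, IsIntegral ℤ c ∧
        ∏ μ ∈ primitiveRoots ℓ Cl, f μ = f ζ * f ζ⁻¹ * c := by
    intro f hf
    have h1' : ζ⁻¹ ∈ (primitiveRoots ℓ Cl).erase ζ := Finset.mem_erase.2 ⟨hne, hζinvmem⟩
    refine ⟨∏ μ ∈ ((primitiveRoots ℓ Cl).erase ζ).erase ζ⁻¹, f μ, ?_, ?_⟩
    · exact IsIntegral.prod f fun μ hμ =>
        hf μ (Finset.mem_of_mem_erase (Finset.mem_of_mem_erase hμ))
    · rw [← Finset.mul_prod_erase _ f hζmem, ← Finset.mul_prod_erase _ f h1', mul_assoc]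
  obtain ⟨c1, hc1int, hc1⟩ := split (fun μ => 1 - μ)
    (fun μ hμ => isIntegral_one.sub (hintμ μ hμ))
  obtain ⟨c2, hc2int, hc2⟩ := split (fun μ => -1 - μ)
    (fun μ hμ => isIntegral_one.neg.sub (hintμ μ hμ))
  have e1 : (ℓ : Cl) = (2 - A) * c1 := by
    rw [h1, hc1]
    have : (1 - ζ) * (1 - ζ⁻¹) = 2 - A := by
      rw [haζ]
      linear_combination hζζ
    rw [this]
  have e2 : (1 : Cl) = (2 + A) * c2 := by
    rw [hm1, hc2]
    have : (-1 - ζ) * (-1 - ζ⁻¹) = 2 + A := by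
      rw [haζ]
      linear_combination hζζ
    rw [this]
  have key : (A ^ 2 - 4) * (-(c1 * c2)) = (ℓ : Cl) := by
    linear_combination (-(2 + A) * c2) * e1 - (ℓ : Cl) * e2
  have hAne : A ^ 2 - 4 ≠ 0 := by
    intro h0
    rw [h0, zero_mul] at key
    exact (Nat.cast_ne_zero.2 hℓ.ne_zero) key.symm
  have hφa : φ ((a : K) ^ 2 - 4) = A ^ 2 - 4 := by
    rw [map_sub, map_pow, ← hA]
    norm_num
    exact map_ofNat φ 4
  have hak : ((a : K) ^ 2 - 4) ≠ 0 := by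
    intro h0
    exact hAne (by rw [← hφa, h0, map_zero])
  set k : K := (ℓ : K) * ((a : K) ^ 2 - 4)⁻¹ with hk
  have hφk : φ k = -(c1 * c2) := by
    rw [hk, map_mul, map_natCast, map_inv₀, hφa]
    rw [mul_inv_eq_iff_eq_mul₀ hAne]
    linear_combination -key
  have hkint : IsIntegral ℤ k := by
    rw [← isIntegral_algebraMap_iff (algebraMap K Cl).injective]
    rw [← hφ, hφk]
    exact (hc1int.mul hc2int).neg
  have hkmem : k ∈ S.integer K := by
    have := (S.integer K).algebraMap_mem (⟨k, hkint⟩ : 𝓞 K)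
    exact this
  set b : S.integer K := ⟨k, hkmem⟩ with hb
  have hab : (a ^ 2 - 4) * b = ((ℓ : ℕ) : S.integer K) := by
    have h4 : ((4 : S.integer K) : K) = 4 := by norm_cast
    apply Subtype.ext
    push_cast [h4]
    show ((a : K) ^ 2 - 4) * k = (ℓ : K)
    rw [hk]
    field_simp
  obtain ⟨U, hU⟩ := hℓinv
  exact IsUnit.of_mul_eq_one (b * ↑U⁻¹) (by
    rw [← mul_assoc, hab, ← hU, Units.mul_inv])



/-- Let `K` be a number field, `S` a finite set of finite places,
`O = O_{K,S}`, and `ℓ` an odd prime invertible in `O`.  Let `a ∈ O` with `a = ζ + ζ⁻¹` for a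
primitive `ℓ`-th root of unity `ζ` in an algebraic closure of `K`, and assume `K` contains no
primitive `ℓ`-th root of unity (so `R = O[T]/(T² − aT + 1)` is a domain).  Then for every
`g ∈ SL₂(O)` of order exactly `ℓ` with `tr(g) = a`, the centralizer of `g` in `SL₂(O)` is
isomorphic as a group to `ker(Nm₁ : Rˣ → Oˣ)`, the units of `R` of norm `1`. -/
theorem centralizer_iso_ker_norm (K : Type*) [Field K] [NumberField K]
    (S : Set (HeightOneSpectrum (𝓞 K))) (hS : S.Finite)
    (ℓ : ℕ) (hℓ : ℓ.Prime) (hℓodd : Odd ℓ) (hℓinv : IsUnit (ℓ : S.integer K))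
    (a : S.integer K)
    (ha : ∃ ζ : AlgebraicClosure K, IsPrimitiveRoot ζ ℓ ∧
      algebraMap K (AlgebraicClosure K) (a : K) = ζ + ζ⁻¹)
    (hKnoζ : ¬∃ ζ : K, IsPrimitiveRoot ζ ℓ)
    (g : Matrix.SpecialLinearGroup (Fin 2) (S.integer K))
    (hg : orderOf g = ℓ)
    (htr : Matrix.trace (g : Matrix (Fin 2) (Fin 2) (S.integer K)) = a) :
    Nonempty (Subgroup.centralizer {g} ≃*
      (Units.map (Algebra.norm (S.integer K) :
        QuadExt (S.integer K) a →* S.integer K)).ker) := by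
  haveI : Nontrivial (S.integer K) :=
    ⟨0, 1, fun h => zero_ne_one (congrArg Subtype.val h : ((0 : S.integer K) : K) = 1)⟩
  exact QuadCentAux.quad_central a (disc_isUnit S ℓ hℓ hℓodd hℓinv a ha) g htr
end

section
/- Let D be an integral domain of characteristic 0, ℓ an odd prime, and g ∈ SL₂(D) an element of order exactly ℓ. Then the centralizer of g in SL₂(D) is a subgroup of index at most 2 in the normalizer of the cyclic subgroup ⟨g⟩ in SL₂(D). -/
open Matrix

section Aux

variable {D : Type*} [CommRing D] [IsDomain D] [CharZero D]

private lemma sl2_sq (A : Matrix (Fin 2) (Fin 2) D) (h : A.det = 1) :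
    A * A = A.trace • A - 1 := by
  rw [Matrix.det_fin_two] at h
  ext i j
  fin_cases i <;> fin_cases j <;>
    simp [Matrix.mul_apply, Fin.sum_univ_two, Matrix.trace_fin_two, Matrix.one_apply,
      Matrix.sub_apply, smul_eq_mul] <;>
    (first | linear_combination h | linear_combination -h | ring)

private lemma det_sub_one_aux (A : Matrix (Fin 2) (Fin 2) D) (h : A.det = 1) :
    (A - 1).det = 2 - A.trace := by
  rw [Matrix.det_fin_two] at h
  rw [Matrix.det_fin_two]
  simp [Matrix.sub_apply, Matrix.one_apply, Matrix.trace_fin_two]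
  linear_combination h

private lemma eq_one_of_trace_eq_two (a : Matrix.SpecialLinearGroup (Fin 2) D) (ℓ : ℕ)
    (hℓ : ℓ ≠ 0) (hpow : a ^ ℓ = 1)
    (htr : (a : Matrix (Fin 2) (Fin 2) D).trace = 2) : a = 1 := by
  set A : Matrix (Fin 2) (Fin 2) D := ↑a with hA
  set N : Matrix (Fin 2) (Fin 2) D := A - 1 with hN
  have hA1 : A = 1 + N := by rw [hN]; abel
  have hdet : A.det = 1 := a.2
  have hsq : A * A = (2 : D) • A - 1 := by rw [sl2_sq A hdet, htr]
  have hN2 : N * N = 0 := by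
    have e : N * N = A * A - A - A + 1 := by rw [hN]; noncomm_ring
    rw [e, hsq, two_smul]
    abel
  have key : ∀ n : ℕ, A ^ n = 1 + (n : D) • N := by
    intro n
    induction n with
    | zero => simp
    | succ n ih =>
      rw [pow_succ, ih, hA1]
      push_cast
      calc (1 + (n : D) • N) * (1 + N)
          = 1 * 1 + 1 * N + ((n : D) • N) * 1 + ((n : D) • N) * N := by
            rw [add_mul, mul_add, mul_add]; abel
        _ = 1 + ((n : D) + 1) • N := by
            rw [one_mul, one_mul, mul_one, smul_mul_assoc, hN2, smul_zero, add_zero]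
            module
  have hAl : A ^ ℓ = 1 := by
    rw [hA, ← Matrix.SpecialLinearGroup.coe_pow, hpow, Matrix.SpecialLinearGroup.coe_one]
  rw [key ℓ, add_eq_left] at hAl
  have hℓD : (ℓ : D) ≠ 0 := Nat.cast_ne_zero.mpr hℓ
  have hN0 : N = 0 := by
    ext i j
    have := congrFun (congrFun hAl i) j
    simp only [Matrix.smul_apply, smul_eq_mul, Matrix.zero_apply] at this ⊢
    rcases mul_eq_zero.mp this with h' | h'
    · exact absurd h' hℓD
    · exact h'
  apply Subtype.ext
  rw [← hA, hA1, hN0, add_zero, Matrix.SpecialLinearGroup.coe_one]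

private lemma conj_eq_or_conj_eq_inv (ℓ : ℕ) (hℓ : ℓ.Prime)
    (g : Matrix.SpecialLinearGroup (Fin 2) D) (hg : orderOf g = ℓ)
    (x : Matrix.SpecialLinearGroup (Fin 2) D)
    (hx : x ∈ Subgroup.normalizer (Subgroup.zpowers g : Set (Matrix.SpecialLinearGroup (Fin 2) D))) :
    x * g * x⁻¹ = g ∨ x * g * x⁻¹ = g⁻¹ := by
  have hgl : g ^ ℓ = 1 := by rw [← hg]; exact pow_orderOf_eq_one g
  have hmem : x * g * x⁻¹ ∈ Subgroup.zpowers g :=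
    (Subgroup.mem_normalizer_iff.mp hx g).mp (Subgroup.mem_zpowers g)
  obtain ⟨k, hk0⟩ := hmem
  have hk : g ^ k = x * g * x⁻¹ := hk0
  set h : Matrix.SpecialLinearGroup (Fin 2) D := x * g * x⁻¹ with hh
  set G : Matrix (Fin 2) (Fin 2) D := ↑g with hG
  set H : Matrix (Fin 2) (Fin 2) D := ↑h with hH
  have hinvx : ((x⁻¹ : Matrix.SpecialLinearGroup (Fin 2) D) : Matrix (Fin 2) (Fin 2) D)
      * ((x : Matrix.SpecialLinearGroup (Fin 2) D) : Matrix (Fin 2) (Fin 2) D) = 1 := by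
    rw [← Matrix.SpecialLinearGroup.coe_mul, inv_mul_cancel, Matrix.SpecialLinearGroup.coe_one]
  have htr : H.trace = G.trace := by
    rw [hH, hh, Matrix.SpecialLinearGroup.coe_mul, Matrix.SpecialLinearGroup.coe_mul,
      Matrix.trace_mul_comm, ← mul_assoc, hinvx, one_mul, hG]
  have hcomm : Commute g h := by rw [← hk]; exact (Commute.refl g).zpow_right k
  have hcommM : G * H = H * G := by
    rw [hG, hH, ← Matrix.SpecialLinearGroup.coe_mul, ← Matrix.SpecialLinearGroup.coe_mul,
      hcomm.eq]
  set t : D := G.trace with ht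
  have hGG : G * G = t • G - 1 := sl2_sq G g.2
  have hHH : H * H = t • H - 1 := by rw [sl2_sq H h.2, htr]
  have GHG : G * (H * G) = H * (G * G) := by rw [← mul_assoc, hcommM, mul_assoc]
  have key : (H - G) * (H * G - 1) = 0 := by
    calc (H - G) * (H * G - 1)
        = H * H * G - G * (H * G) - H + G := by noncomm_ring
      _ = (H * H) * G - H * (G * G) - H + G := by rw [GHG]
      _ = (t • H - 1) * G - H * (t • G - 1) - H + G := by rw [hHH, hGG]
      _ = t • (H * G) - G - (t • (H * G) - H) - H + G := by
          rw [sub_mul, mul_sub, one_mul, mul_one, smul_mul_assoc, mul_smul_comm]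
      _ = 0 := by abel
  have hdet : (H - G).det * (H * G - 1).det = 0 := by
    rw [← Matrix.det_mul, key]
    simp
  set a : Matrix.SpecialLinearGroup (Fin 2) D := g ^ (k - 1) with ha'
  set b : Matrix.SpecialLinearGroup (Fin 2) D := g ^ (k + 1) with hb'
  have ha : a * g = h := by rw [ha', ← hk, ← _root_.zpow_add_one, sub_add_cancel]
  have hb : h * g = b := by rw [hb', ← hk, ← _root_.zpow_add_one]
  have hHmG : H - G = ((↑a : Matrix (Fin 2) (Fin 2) D) - 1) * G := by
    rw [sub_mul, one_mul, hG, ← Matrix.SpecialLinearGroup.coe_mul, ha, hH]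
  have hHG1 : H * G - 1 = (↑b : Matrix (Fin 2) (Fin 2) D) - 1 := by
    rw [hH, hG, ← Matrix.SpecialLinearGroup.coe_mul, hb]
  rw [hHmG, hHG1, Matrix.det_mul, Matrix.SpecialLinearGroup.det_coe, mul_one] at hdet
  have powl : ∀ m : ℤ, (g ^ m) ^ ℓ = 1 := by
    intro m
    rw [← _root_.zpow_natCast (g ^ m) ℓ, ← _root_.zpow_mul, mul_comm, _root_.zpow_mul, _root_.zpow_natCast, hgl, _root_.one_zpow]
  rcases mul_eq_zero.mp hdet with h0 | h0
  · left
    have htr2 : (↑a : Matrix (Fin 2) (Fin 2) D).trace = 2 := by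
      rw [det_sub_one_aux _ a.2] at h0
      exact (sub_eq_zero.mp h0).symm
    have ha1 : a = 1 := eq_one_of_trace_eq_two a ℓ hℓ.ne_zero (powl (k - 1)) htr2
    rw [← ha, ha1, one_mul]
  · right
    have htr2 : (↑b : Matrix (Fin 2) (Fin 2) D).trace = 2 := by
      rw [det_sub_one_aux _ b.2] at h0
      exact (sub_eq_zero.mp h0).symm
    have hb1 : b = 1 := eq_one_of_trace_eq_two b ℓ hℓ.ne_zero (powl (k + 1)) htr2
    rw [hb1] at hb
    exact eq_inv_of_mul_eq_one_left hb

open scoped Classical in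
private lemma sign_mul_aux {Γ : Type*} [Group Γ] {g x y : Γ}
    (hgne : g⁻¹ ≠ g)
    (hx : x * g = g * x ∨ x * g = g⁻¹ * x)
    (hy : y * g = g * y ∨ y * g = g⁻¹ * y) :
    (if x * y * g = g * (x * y) then (1 : ℤˣ) else -1)
      = (if x * g = g * x then (1 : ℤˣ) else -1)
        * (if y * g = g * y then (1 : ℤˣ) else -1) := by
  have excl : ∀ z : Γ, z * g = g * z → z * g = g⁻¹ * z → False := by
    intro z h1 h2
    rw [h1] at h2
    exact hgne (mul_right_cancel h2).symm
  rcases hx with hx | hx <;> rcases hy with hy | hy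
  · have hxy : x * y * g = g * (x * y) := by
      rw [mul_assoc, hy, ← mul_assoc, hx, mul_assoc]
    simp [hxy, hx, hy]
  · have hcx : Commute x g := hx
    have hxi : x * g⁻¹ = g⁻¹ * x := hcx.inv_right.eq
    have hxy : x * y * g = g⁻¹ * (x * y) := by
      rw [mul_assoc, hy, ← mul_assoc, hxi, mul_assoc]
    have hny : ¬(y * g = g * y) := fun hcon => excl y hcon hy
    have hnxy : ¬(x * y * g = g * (x * y)) := fun hcon => excl _ hcon hxy
    simp [hnxy, hx, hny]
  · have hxy : x * y * g = g⁻¹ * (x * y) := by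
      rw [mul_assoc, hy, ← mul_assoc, hx, mul_assoc]
    have hnx : ¬(x * g = g * x) := fun hcon => excl x hcon hx
    have hnxy : ¬(x * y * g = g * (x * y)) := fun hcon => excl _ hcon hxy
    simp [hnxy, hnx, hy]
  · have h1 : g * (x * g) = x := by rw [hx, ← mul_assoc, mul_inv_cancel, one_mul]
    have hxi : x * g⁻¹ = g * x := by
      calc x * g⁻¹ = g * (x * g) * g⁻¹ := by rw [h1]
        _ = g * x := by group
    have hxy : x * y * g = g * (x * y) := by
      rw [mul_assoc, hy, ← mul_assoc, hxi, mul_assoc]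
    have hnx : ¬(x * g = g * x) := fun hcon => excl x hcon hx
    have hny : ¬(y * g = g * y) := fun hcon => excl y hcon hy
    simp [hxy, hnx, hny]

end Aux

/-- Let `D` be an integral domain of characteristic `0`, `ℓ` an odd prime,
and `g ∈ SL₂(D)` of order exactly `ℓ`.  Then the centralizer of `g` in `SL₂(D)` is a subgroup
of index at most `2` (i.e. of index `1` or `2`) in the normalizer of the cyclic subgroup
`⟨g⟩`. -/
theorem centralizer_relindex_normalizer_le_two
    (D : Type*) [CommRing D] [IsDomain D] [CharZero D]
    (ℓ : ℕ) (hℓ : ℓ.Prime) (hℓodd : Odd ℓ)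
    (g : Matrix.SpecialLinearGroup (Fin 2) D) (hg : orderOf g = ℓ) :
    Subgroup.centralizer {g} ≤ Subgroup.normalizer (Subgroup.zpowers g : Set (Matrix.SpecialLinearGroup (Fin 2) D)) ∧
      ((Subgroup.centralizer {g}).relIndex (Subgroup.normalizer (Subgroup.zpowers g : Set (Matrix.SpecialLinearGroup (Fin 2) D))) = 1 ∨
        (Subgroup.centralizer {g}).relIndex (Subgroup.normalizer (Subgroup.zpowers g : Set (Matrix.SpecialLinearGroup (Fin 2) D))) = 2) := by
  classical
  set N : Subgroup (Matrix.SpecialLinearGroup (Fin 2) D) := Subgroup.normalizer (Subgroup.zpowers g : Set (Matrix.SpecialLinearGroup (Fin 2) D)) with hNdef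
  -- g ≠ g⁻¹
  have hgne : g⁻¹ ≠ g := by
    intro hcon
    have : g ^ 2 = 1 := by
      rw [pow_two]
      nth_rewrite 1 [← hcon]
      rw [inv_mul_cancel]
    have hdvd : orderOf g ∣ 2 := orderOf_dvd_of_pow_eq_one this
    rw [hg] at hdvd
    have h2 : ℓ = 2 := (Nat.prime_dvd_prime_iff_eq hℓ Nat.prime_two).mp hdvd
    rw [h2, Nat.odd_iff] at hℓodd
    omega
  -- centralizer ≤ normalizer
  have hle : Subgroup.centralizer {g} ≤ N := by
    intro x hx
    have hxg : g * x = x * g := (Subgroup.mem_centralizer_iff.mp hx) g rfl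
    have hc : Commute g x := hxg
    have key : ∀ y ∈ Subgroup.zpowers g, x * y * x⁻¹ = y := by
      rintro _ ⟨n, rfl⟩
      have hcn : Commute (g ^ n) x := (hc.zpow_left n)
      rw [← hcn.eq, mul_assoc, mul_inv_cancel, mul_one]
    rw [hNdef, Subgroup.mem_normalizer_iff]
    intro y
    constructor
    · intro hy; rw [key y hy]; exact hy
    · intro hy
      obtain ⟨n, hn0⟩ := hy
      have hn : g ^ n = x * y * x⁻¹ := hn0
      have hcn : Commute (g ^ n) x := (hc.zpow_left n)
      have : y = g ^ n := by
        calc y = x⁻¹ * (x * y * x⁻¹) * x := by group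
          _ = x⁻¹ * g ^ n * x := by rw [← hn]
          _ = x⁻¹ * (g ^ n * x) := by rw [mul_assoc]
          _ = x⁻¹ * (x * g ^ n) := by rw [hcn.eq]
          _ = g ^ n := by rw [← mul_assoc, inv_mul_cancel, one_mul]
      rw [this]
      exact ⟨n, rfl⟩
  refine ⟨hle, ?_⟩
  -- dichotomy for elements of N
  have dich : ∀ x : Matrix.SpecialLinearGroup (Fin 2) D, x ∈ N →
      (x * g = g * x ∨ x * g = g⁻¹ * x) := by
    intro x hxN
    rcases conj_eq_or_conj_eq_inv ℓ hℓ g hg x hxN with h' | h'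
    · left
      have e : x * g * x⁻¹ * x = g * x := by rw [h']
      rwa [inv_mul_cancel_right] at e
    · right
      have e : x * g * x⁻¹ * x = g⁻¹ * x := by rw [h']
      rwa [inv_mul_cancel_right] at e
  let f : N →* ℤˣ :=
    { toFun := fun x =>
        if (x : Matrix.SpecialLinearGroup (Fin 2) D) * g
            = g * (x : Matrix.SpecialLinearGroup (Fin 2) D) then 1 else -1
      map_one' := by simp
      map_mul' := by
        intro x y
        convert sign_mul_aux hgne (dich _ x.2) (dich _ y.2) <;> rfl
    }
  have hker : f.ker = (Subgroup.centralizer {g}).subgroupOf N := by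
    ext x
    have hfx : f x = (if (x : Matrix.SpecialLinearGroup (Fin 2) D) * g
        = g * (x : Matrix.SpecialLinearGroup (Fin 2) D) then 1 else -1) := rfl
    rw [MonoidHom.mem_ker, hfx, Subgroup.mem_subgroupOf, Subgroup.mem_centralizer_iff]
    constructor
    · intro h1 z hz
      rw [Set.mem_singleton_iff] at hz
      rw [hz]
      have hcomm' : (x : Matrix.SpecialLinearGroup (Fin 2) D) * g = g * x := by
        by_contra hne2
        rw [if_neg hne2] at h1
        exact (by decide : (-1 : ℤˣ) ≠ 1) h1
      exact hcomm'.symm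
    · intro h1
      rw [if_pos ((h1 g rfl).symm)]
  have hrel : (Subgroup.centralizer {g}).relIndex N = f.ker.index := by
    rw [hker]
    rfl
  have hdvd : f.ker.index ∣ 2 := by
    rw [Subgroup.index_ker]
    have h1 : Nat.card f.range ∣ Nat.card ℤˣ := Subgroup.card_subgroup_dvd_card f.range
    have h2 : Nat.card ℤˣ = 2 := by
      rw [Nat.card_eq_fintype_card, Fintype.card_units_int]
    rwa [h2] at h1
  rw [hrel]
  exact (Nat.prime_two).eq_one_or_self_of_dvd _ hdvd
end

section
/- Let F be a field of characteristic 0 and ℓ an odd prime. Then every elementary abelian ℓ-subgroup of SL₂(F), i.e. every commutative subgroup E ≤ SL₂(F) in which every element g satisfies g^ℓ = 1, is cyclic; in particular such a subgroup has cardinality 1 or ℓ. -/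
open Matrix

namespace SL2Aux

variable {K : Type*} [Field K]

lemma scalar_of (A : Matrix (Fin 2) (Fin 2) K) (h01 : A 0 1 = 0) (h10 : A 1 0 = 0)
    (hd : A 0 0 = A 1 1) : A = (A 0 0) • (1 : Matrix (Fin 2) (Fin 2) K) := by
  ext i j
  fin_cases i <;> fin_cases j <;>
    simp [Matrix.smul_apply, Matrix.one_apply, h01, h10, hd]

lemma repr_unique (A : Matrix (Fin 2) (Fin 2) K) (hns : ∀ c : K, A ≠ c • 1)
    {α β α' β' : K} (h : α • (1 : Matrix (Fin 2) (Fin 2) K) + β • A = α' • 1 + β' • A) :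
    α = α' ∧ β = β' := by
  have h00 := congrFun (congrFun h 0) 0
  have h01 := congrFun (congrFun h 0) 1
  have h10 := congrFun (congrFun h 1) 0
  have h11 := congrFun (congrFun h 1) 1
  simp [Matrix.add_apply, Matrix.smul_apply, Matrix.one_apply] at h00 h01 h10 h11
  by_cases hb : β = β'
  · subst hb
    exact ⟨by linear_combination h00, rfl⟩
  · exfalso
    have hq : A 0 1 = 0 := h01.resolve_left hb
    have hr : A 1 0 = 0 := h10.resolve_left hb
    have hps : A 0 0 = A 1 1 := by
      have h2 : (β - β') * (A 0 0 - A 1 1) = 0 := by linear_combination h00 - h11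
      exact sub_eq_zero.mp ((mul_eq_zero.mp h2).resolve_left (sub_ne_zero.mpr hb))
    exact hns (A 0 0) (scalar_of A hq hr hps)

lemma mem_span (A B : Matrix (Fin 2) (Fin 2) K) (hns : ∀ c : K, A ≠ c • 1)
    (hc : A * B = B * A) :
    ∃ α β : K, B = α • (1 : Matrix (Fin 2) (Fin 2) K) + β • A := by
  have e00 := congrFun (congrFun hc 0) 0
  have e01 := congrFun (congrFun hc 0) 1
  have e10 := congrFun (congrFun hc 1) 0
  have e11 := congrFun (congrFun hc 1) 1
  simp only [Matrix.mul_apply, Fin.sum_univ_two] at e00 e01 e10 e11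
  by_cases hq : A 0 1 ≠ 0
  · refine ⟨B 0 0 - (B 0 1 / A 0 1) * A 0 0, B 0 1 / A 0 1, ?_⟩
    ext i j
    fin_cases i <;> fin_cases j <;>
      simp only [Matrix.add_apply, Matrix.smul_apply, Matrix.one_apply, Fin.zero_eta,
        Fin.mk_one, if_true, if_false, Fin.isValue, one_ne_zero, zero_ne_one, ite_true,
        ite_false, mul_one, mul_zero, add_zero, zero_add, smul_eq_mul] <;>
      field_simp <;>
      first
        | linear_combination e00
        | linear_combination e01
        | ring
  · push_neg at hq
    by_cases hr : A 1 0 ≠ 0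
    · refine ⟨B 0 0 - (B 1 0 / A 1 0) * A 0 0, B 1 0 / A 1 0, ?_⟩
      ext i j
      fin_cases i <;> fin_cases j <;>
        simp only [Matrix.add_apply, Matrix.smul_apply, Matrix.one_apply, Fin.zero_eta,
          Fin.mk_one, if_true, if_false, Fin.isValue, one_ne_zero, zero_ne_one, ite_true,
          ite_false, mul_one, mul_zero, add_zero, zero_add, smul_eq_mul] <;>
        field_simp <;>
        first
          | linear_combination e00
          | linear_combination -e00
          | linear_combination e10
          | linear_combination -e10
          | ring
    · push_neg at hr
      have hps : A 0 0 ≠ A 1 1 := by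
        intro h
        exact hns (A 0 0) (scalar_of A hq hr h)
      have hx : B 0 1 = 0 := by
        have h2 : B 0 1 * (A 0 0 - A 1 1) = 0 := by
          rw [hq] at e01; linear_combination e01
        exact (mul_eq_zero.mp h2).resolve_right (sub_ne_zero.mpr hps)
      have hy : B 1 0 = 0 := by
        have h2 : B 1 0 * (A 0 0 - A 1 1) = 0 := by
          rw [hr] at e10; linear_combination -e10
        exact (mul_eq_zero.mp h2).resolve_right (sub_ne_zero.mpr hps)
      refine ⟨B 0 0 - ((B 0 0 - B 1 1) / (A 0 0 - A 1 1)) * A 0 0,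
        (B 0 0 - B 1 1) / (A 0 0 - A 1 1), ?_⟩
      have hd : A 0 0 - A 1 1 ≠ 0 := sub_ne_zero.mpr hps
      ext i j
      fin_cases i <;> fin_cases j <;>
        simp only [Matrix.add_apply, Matrix.smul_apply, Matrix.one_apply, Fin.zero_eta,
          Fin.mk_one, if_true, if_false, Fin.isValue, one_ne_zero, zero_ne_one, ite_true,
          ite_false, mul_one, mul_zero, add_zero, zero_add, smul_eq_mul, hq, hr, hx, hy] <;>
        field_simp <;>
        ring

lemma cayley (A : Matrix (Fin 2) (Fin 2) K) (hdet : A.det = 1) :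
    A * A = (A 0 0 + A 1 1) • A - 1 := by
  rw [Matrix.det_fin_two] at hdet
  ext i j
  fin_cases i <;> fin_cases j <;>
    simp only [Matrix.mul_apply, Fin.sum_univ_two, Matrix.sub_apply, Matrix.smul_apply,
      Matrix.one_apply, Fin.zero_eta, Fin.mk_one, Fin.isValue, one_ne_zero, zero_ne_one,
      ite_true, ite_false, if_true, if_false, smul_eq_mul, sub_zero] <;>
    first
      | linear_combination hdet
      | linear_combination -hdet
      | linear_combination 2*hdet
      | linear_combination -2*hdet
      | ring

lemma pow_reprB (A B : Matrix (Fin 2) (Fin 2) K) (hdet : A.det = 1) (u v : K)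
    (huv : u * v = 1) (ht : u + v = A 0 0 + A 1 1) (γ δ : K)
    (hB : B = γ • (1 : Matrix (Fin 2) (Fin 2) K) + δ • A) (n : ℕ) :
    ∃ γ' δ' : K, B ^ n = γ' • (1 : Matrix (Fin 2) (Fin 2) K) + δ' • A ∧
      γ' + δ' * u = (γ + δ * u) ^ n ∧ γ' + δ' * v = (γ + δ * v) ^ n := by
  induction n with
  | zero => exact ⟨1, 0, by simp, by simp, by simp⟩
  | succ n ih =>
    obtain ⟨γ', δ', hrep, hu, hv⟩ := ih
    refine ⟨γ' * γ - δ' * δ, γ' * δ + δ' * γ + δ' * δ * (A 0 0 + A 1 1), ?_, ?_, ?_⟩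
    · rw [pow_succ, hrep, hB]
      have hc := cayley A hdet
      simp only [mul_add, add_mul, smul_mul_assoc, mul_smul_comm, one_mul, mul_one,
        smul_smul, hc]
      module
    · rw [pow_succ, ← hu, ← ht]
      linear_combination (δ' * δ) * huv
    · rw [pow_succ, ← hv, ← ht]
      linear_combination (δ' * δ) * huv

lemma det_repr (A : Matrix (Fin 2) (Fin 2) K) (hdet : A.det = 1) (u v : K)
    (huv : u * v = 1) (ht : u + v = A 0 0 + A 1 1) (γ δ : K) :
    (γ • (1 : Matrix (Fin 2) (Fin 2) K) + δ • A).det = (γ + δ * u) * (γ + δ * v) := by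
  rw [Matrix.det_fin_two] at hdet ⊢
  simp only [Matrix.add_apply, Matrix.smul_apply, Matrix.one_apply, Fin.isValue,
    one_ne_zero, zero_ne_one, ite_true, ite_false, if_true, if_false, smul_eq_mul,
    mul_one, mul_zero, add_zero, zero_add]
  linear_combination (δ * δ) * hdet + (γ * δ) * ht.symm - (δ * δ) * huv

lemma unipotent_pow (A : Matrix (Fin 2) (Fin 2) K)
    (h : A * A = (2 : K) • A - 1) (n : ℕ) :
    A ^ (n + 1) = ((n : K) + 1) • A - (n : K) • (1 : Matrix (Fin 2) (Fin 2) K) := by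
  induction n with
  | zero => simp
  | succ n ih =>
    rw [pow_succ, ih, sub_mul, smul_mul_assoc, smul_mul_assoc, one_mul, h]
    push_cast
    module


lemma key {K : Type*} [Field K] [IsAlgClosed K] [CharZero K] {ℓ : ℕ} (hp : ℓ.Prime)
    (hodd : Odd ℓ) (A B : Matrix (Fin 2) (Fin 2) K) (hA1 : A ≠ 1)
    (hdA : A.det = 1) (hdB : B.det = 1) (hAl : A ^ ℓ = 1) (hBl : B ^ ℓ = 1)
    (hAB : A * B = B * A) : ∃ j : ℕ, B = A ^ j := by
  haveI : Fact ℓ.Prime := ⟨hp⟩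
  haveI : NeZero ℓ := ⟨hp.ne_zero⟩
  have hl0 : (ℓ : K) ≠ 0 := Nat.cast_ne_zero.mpr hp.ne_zero
  -- A is not scalar
  have hns : ∀ c : K, A ≠ c • 1 := by
    intro c hc
    have hc2 : c ^ 2 = 1 := by
      have := hdA
      rw [hc, Matrix.det_smul, Matrix.det_one, mul_one] at this
      simpa using this
    have hcl : c ^ ℓ = 1 := by
      have h1 : A ^ ℓ = (c ^ ℓ) • (1 : Matrix (Fin 2) (Fin 2) K) := by
        rw [hc, smul_pow, one_pow]
      rw [hAl] at h1
      have := congrFun (congrFun h1 0) 0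
      simpa [Matrix.smul_apply, Matrix.one_apply] using this.symm
    obtain ⟨m, hm⟩ := hodd
    have hcone : c = 1 := by
      have : c ^ ℓ = c := by
        rw [hm, pow_add, pow_mul, hc2, one_pow, one_mul, pow_one]
      rw [hcl] at this
      exact this.symm
    rw [hcone, one_smul] at hc
    exact hA1 hc
  -- find the eigenvalues u, v
  set t : K := A 0 0 + A 1 1 with ht_def
  obtain ⟨sq, hsq⟩ := IsAlgClosed.exists_pow_nat_eq (t ^ 2 - 4) (n := 2) (by norm_num)
  set u : K := (t + sq) / 2 with hu_def
  set v : K := (t - sq) / 2 with hv_def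
  have h2 : (2 : K) ≠ 0 := two_ne_zero
  have huv : u * v = 1 := by
    rw [hu_def, hv_def]
    field_simp
    linear_combination -hsq
  have ht : u + v = A 0 0 + A 1 1 := by
    rw [hu_def, hv_def, ← ht_def]; field_simp; ring
  have hArep : A = (0 : K) • (1 : Matrix (Fin 2) (Fin 2) K) + (1 : K) • A := by simp
  -- u^ℓ = 1 and v^ℓ = 1
  have hroots : u ^ ℓ = 1 ∧ v ^ ℓ = 1 := by
    obtain ⟨α, β, h1, h2u, h3v⟩ := pow_reprB A A hdA u v huv ht 0 1 hArep ℓ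
    rw [hAl] at h1
    have h1' : (1 : K) • (1 : Matrix (Fin 2) (Fin 2) K) + (0 : K) • A = α • 1 + β • A := by
      rw [← h1]; simp
    obtain ⟨hα, hβ⟩ := repr_unique A hns h1'
    constructor
    · have h5 : u ^ ℓ = α + β * u := by rw [h2u]; ring
      rw [h5, ← hα, ← hβ]; ring
    · have h5 : v ^ ℓ = α + β * v := by rw [h3v]; ring
      rw [h5, ← hα, ← hβ]; ring
  have hu0 : u ≠ 0 := by
    intro h
    rw [h, zero_mul] at huv
    exact zero_ne_one huv
  -- u ≠ v
  have huvne : u ≠ v := by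
    intro h
    have hu2 : u * u = 1 := by rw [h] at huv ⊢; exact huv
    have hu1 : u = 1 := by
      obtain ⟨m, hm⟩ := hodd
      have : u ^ ℓ = u := by
        rw [hm, pow_add, pow_mul, pow_one, pow_two, hu2, one_pow, one_mul]
      rw [hroots.1] at this
      exact this.symm
    have ht2 : A 0 0 + A 1 1 = 2 := by
      rw [← ht, ← h, hu1]; norm_num
    have hcay : A * A = (2 : K) • A - 1 := by
      rw [cayley A hdA, ht2]
    have hpow := unipotent_pow A hcay (ℓ - 1)
    rw [Nat.sub_add_cancel hp.one_le, hAl] at hpow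
    have hcast : ((ℓ - 1 : ℕ) : K) = (ℓ : K) - 1 := by
      rw [Nat.cast_sub hp.one_le, Nat.cast_one]
    rw [hcast] at hpow
    have hsm : (ℓ : K) • A = (ℓ : K) • (1 : Matrix (Fin 2) (Fin 2) K) := by
      have h3 : ((ℓ : K) - 1 + 1) = (ℓ : K) := by ring
      rw [h3] at hpow
      have h8 : (ℓ : K) • A - ((ℓ : K) - 1) • (1 : Matrix (Fin 2) (Fin 2) K) = 1 := hpow.symm
      rw [sub_eq_iff_eq_add] at h8
      rw [h8]
      module
    exact hA1 (smul_right_injective (Matrix (Fin 2) (Fin 2) K) hl0 hsm)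
  -- u ≠ 1
  have hu1 : u ≠ 1 := by
    intro h
    rw [h, one_mul] at huv
    exact huvne (h.trans huv.symm)
  -- B lies in the span of 1 and A
  obtain ⟨γ, δ, hBrep⟩ := mem_span A B hns hAB
  have hb : (γ + δ * u) ^ ℓ = 1 ∧ (γ + δ * v) ^ ℓ = 1 := by
    obtain ⟨γ', δ', h1, h2u, h3v⟩ := pow_reprB A B hdA u v huv ht γ δ hBrep ℓ
    rw [hBl] at h1
    have h1' : (1 : K) • (1 : Matrix (Fin 2) (Fin 2) K) + (0 : K) • A = γ' • 1 + δ' • A := by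
      rw [← h1]; simp
    obtain ⟨hα, hβ⟩ := repr_unique A hns h1'
    constructor
    · rw [← h2u, ← hα, ← hβ]; ring
    · rw [← h3v, ← hα, ← hβ]; ring
  have hb12 : (γ + δ * u) * (γ + δ * v) = 1 := by
    rw [hBrep, det_repr A hdA u v huv ht γ δ] at hdB
    exact hdB
  -- roots of unity argument
  set uu : Kˣ := Units.mkOfMulEqOne u v huv with huu_def
  set bu : Kˣ := Units.mkOfMulEqOne _ _ hb12 with hbu_def
  have hmemu : uu ∈ rootsOfUnity ℓ K := by
    rw [mem_rootsOfUnity']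
    exact hroots.1
  have hmemb : bu ∈ rootsOfUnity ℓ K := by
    rw [mem_rootsOfUnity']
    exact hb.1
  set u' : rootsOfUnity ℓ K := ⟨uu, hmemu⟩ with hu'_def
  set b' : rootsOfUnity ℓ K := ⟨bu, hmemb⟩ with hb'_def
  have horder : orderOf u' = ℓ := by
    apply orderOf_eq_prime
    · ext
      exact hroots.1
    · intro h
      apply hu1
      have h9 : ((u' : Kˣ) : K) = 1 := by rw [h]; rfl
      exact h9
  have hcard : Nat.card (rootsOfUnity ℓ K) = ℓ := by
    refine le_antisymm ?_ ?_
    · exact card_rootsOfUnity K ℓ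
    · have hd := orderOf_dvd_natCard u'
      rw [horder] at hd
      exact Nat.le_of_dvd Nat.card_pos hd
  have htop : Subgroup.zpowers u' = ⊤ := by
    apply (Subgroup.card_eq_iff_eq_top _).mp
    rw [Nat.card_zpowers, horder, hcard]
  have hbmem : b' ∈ Subgroup.zpowers u' := htop ▸ Subgroup.mem_top b'
  obtain ⟨j, hj⟩ := mem_powers_iff_mem_zpowers.mpr hbmem
  -- extract scalar equation
  have hb1u : u ^ j = γ + δ * u := by
    have := congrArg (fun x : rootsOfUnity ℓ K => ((x : Kˣ) : K)) hj
    simpa [hu'_def, hb'_def, huu_def, hbu_def] using this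
  have hb2v : v ^ j = γ + δ * v := by
    have h1 : u ^ j * (γ + δ * v) = u ^ j * v ^ j := by
      rw [← mul_pow, huv, one_pow, hb1u]
      exact hb12
    exact (mul_left_cancel₀ (pow_ne_zero _ hu0) h1).symm
  -- conclude B = A ^ j
  obtain ⟨α, β, h1, h2u, h3v⟩ := pow_reprB A A hdA u v huv ht 0 1 hArep j
  refine ⟨j, ?_⟩
  have hβδ : β = δ := by
    have h4 : (β - δ) * (u - v) = 0 := by
      have e1 : α + β * u = γ + δ * u := by rw [h2u]; rw [← hb1u]; ring
      have e2 : α + β * v = γ + δ * v := by rw [h3v]; rw [← hb2v]; ring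
      linear_combination e1 - e2
    have := (mul_eq_zero.mp h4).resolve_right (sub_ne_zero.mpr huvne)
    exact sub_eq_zero.mp this
  have hαγ : α = γ := by
    have e1 : α + β * u = γ + δ * u := by rw [h2u]; rw [← hb1u]; ring
    rw [hβδ] at e1
    linear_combination e1
  rw [hBrep, h1, hαγ, hβδ]


end SL2Aux



/-- Let `F` be a field of characteristic `0` and `ℓ` an odd prime.  Every
elementary abelian `ℓ`-subgroup of `SL₂(F)`, i.e. every commutative subgroup in which every
element `g` satisfies `g ^ ℓ = 1`, is cyclic; in particular it has cardinality `1` or `ℓ`. -/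
theorem elementaryAbelian_subgroup_sl2_isCyclic
    (F : Type*) [Field F] [CharZero F] (ℓ : ℕ) (hℓ : ℓ.Prime) (hℓodd : Odd ℓ)
    (E : Subgroup (Matrix.SpecialLinearGroup (Fin 2) F))
    (hcomm : ∀ x ∈ E, ∀ y ∈ E, x * y = y * x)
    (hexp : ∀ x ∈ E, x ^ ℓ = 1) :
    IsCyclic E ∧ (Nat.card E = 1 ∨ Nat.card E = ℓ) := by
  by_cases htriv : ∀ x ∈ E, x = 1
  · have hE : E = ⊥ := (Subgroup.eq_bot_iff_forall E).mpr htriv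
    subst hE
    exact ⟨isCyclic_of_subsingleton, Or.inl Subgroup.card_bot⟩
  · push_neg at htriv
    obtain ⟨a, haE, ha1⟩ := htriv
    haveI : Fact ℓ.Prime := ⟨hℓ⟩
    set K := AlgebraicClosure F with hK
    haveI : CharZero K := charZero_of_injective_algebraMap (algebraMap F K).injective
    set ψ : Matrix (Fin 2) (Fin 2) F →+* Matrix (Fin 2) (Fin 2) K :=
      (algebraMap F K).mapMatrix with hψ
    have hinj : Function.Injective ψ := by
      intro M N h
      ext i j
      exact (algebraMap F K).injective (congrFun (congrFun h i) j)
    have hdet : ∀ x : Matrix.SpecialLinearGroup (Fin 2) F, (ψ x.1).det = 1 := by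
      intro x
      rw [hψ, ← RingHom.map_det, x.2]
      exact map_one _
    have hpow : ∀ (x : Matrix.SpecialLinearGroup (Fin 2) F), x ∈ E → (ψ x.1) ^ ℓ = 1 := by
      intro x hx
      rw [← map_pow, ← Matrix.SpecialLinearGroup.coe_pow, hexp x hx,
        Matrix.SpecialLinearGroup.coe_one]
      exact map_one ψ
    have key' : ∀ b ∈ E, ∃ j : ℕ, b = a ^ j := by
      intro b hbE
      have hA1 : ψ a.1 ≠ 1 := by
        intro h
        apply ha1
        have h2 : a.1 = 1 := hinj (by rw [h, _root_.map_one])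
        exact Subtype.ext h2
      have hAB : ψ a.1 * ψ b.1 = ψ b.1 * ψ a.1 := by
        rw [← _root_.map_mul, ← _root_.map_mul]
        congr 1
        have h3 := hcomm a haE b hbE
        have h4 := congrArg Subtype.val h3
        simpa using h4
      obtain ⟨j, hj⟩ := SL2Aux.key hℓ hℓodd (ψ a.1) (ψ b.1) hA1 (hdet a) (hdet b)
        (hpow a haE) (hpow b hbE) hAB
      refine ⟨j, ?_⟩
      have h5 : ψ b.1 = ψ (a.1 ^ j) := by rw [hj, _root_.map_pow]
      have h6 := hinj h5
      exact Subtype.ext (by rw [h6, Matrix.SpecialLinearGroup.coe_pow])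
    have horder : orderOf a = ℓ := orderOf_eq_prime (hexp a haE) ha1
    have hle : E ≤ Subgroup.zpowers a := by
      intro x hx
      obtain ⟨j, hj⟩ := key' x hx
      exact Subgroup.mem_zpowers_iff.mpr ⟨(j : ℤ), by rw [zpow_natCast, ← hj]⟩
    have hEeq : E = Subgroup.zpowers a := le_antisymm hle (Subgroup.zpowers_le.mpr haE)
    constructor
    · refine ⟨⟨⟨a, haE⟩, fun x => ?_⟩⟩
      obtain ⟨j, hj⟩ := key' x.1 x.2
      refine Subgroup.mem_zpowers_iff.mpr ⟨(j : ℤ), ?_⟩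
      refine Subtype.ext ?_
      rw [SubgroupClass.coe_zpow, zpow_natCast, ← hj]
    · right
      rw [hEeq, Nat.card_zpowers, horder]
end
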